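/- In the translationally invariant 1D XYZ model, all closed-path weights in the path-integral expansion are nonnegative: for H = Σᵢ (α XᵢXᵢ₊₁ + β YᵢYᵢ₊₁ + γ ZᵢZᵢ₊₁), any closed sequence of bitstrings x₁, x₂, …, x_N, x_{N+1} = x₁ in which each consecutive pair differs by the action of a single off-diagonal term (a single application of α XᵢXᵢ₊₁ + β YᵢYᵢ₊₁ on some adjacent pair) has product of matrix elements Π_i ⟨x_{i+1}|α XX + β YY|x_i⟩ = (α−β)^{m₁}(α+β)^{m₂} with m₁ (the number of applications to an aligned pair 00 or 11) and m₂ (applications to an anti-aligned pair 01 or 10) both even; hence the product is ≥ 0. -/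

import Mathlib

open Finset

private def xyzInd (b : Bool) : ℤ := if b then 1 else 0

private lemma xyzInd_flip (b : Bool) :
    xyzInd (!b) - xyzInd b = 1 ∨ xyzInd (!b) - xyzInd b = -1 := by
  cases b <;> simp [xyzInd]

private lemma xyz_sum_sub {n : ℕ} (u v : Fin n → ℤ) (a b : Fin n) (hab : a ≠ b)
    (h : ∀ j, j ≠ a → j ≠ b → u j = v j) :
    (∑ j, u j) - (∑ j, v j) = (u a - v a) + (u b - v b) := by
  have key : (∑ j, (u j - v j)) = ∑ j ∈ ({a, b} : Finset (Fin n)), (u j - v j) := by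
    refine (Finset.sum_subset (Finset.subset_univ _) ?_).symm
    intro j _ hj
    simp only [Finset.mem_insert, Finset.mem_singleton] at hj
    push_neg at hj
    rw [h j hj.1 hj.2, sub_self]
  rw [← Finset.sum_sub_distrib, key, Finset.sum_pair hab]

private lemma xyz_telescope {N : ℕ} (F : Fin (N + 1) → ℤ) (h : F (Fin.last N) = F 0) :
    (∑ k : Fin N, (F k.succ - F k.castSucc)) = 0 := by
  set f : ℕ → ℤ := fun i => F ⟨min i N, Nat.lt_succ_of_le (min_le_right i N)⟩ with hf
  have h1 : ∑ k : Fin N, (F k.succ - F k.castSucc) = ∑ i ∈ Finset.range N, (f (i + 1) - f i) := by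
    rw [Finset.sum_range fun i => f (i + 1) - f i]
    refine Finset.sum_congr rfl fun k _ => ?_
    have hk := k.isLt
    have e1 : f (↑k + 1) = F k.succ :=
      congrArg F (Fin.ext (by simp only [Fin.val_succ]; omega))
    have e2 : f ↑k = F k.castSucc :=
      congrArg F (Fin.ext (by simp only [Fin.coe_castSucc]; omega))
    rw [e1, e2]
  rw [h1, Finset.sum_range_sub]
  have h2 : f N = F (Fin.last N) := congrArg F (Fin.ext (by simp [Fin.val_last]))
  have h3 : f 0 = F 0 := congrArg F (Fin.ext (by simp))
  rw [h2, h3, h, sub_self]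

private lemma xyz_card_even {ι : Type*} [DecidableEq ι] (s : Finset ι) (f : ι → ℤ)
    (h : ∀ i ∈ s, Odd (f i)) (h0 : ∑ i ∈ s, f i = 0) : Even s.card := by
  have hz : ((s.card : ℕ) : ZMod 2) = 0 := by
    have : ((∑ i ∈ s, f i : ℤ) : ZMod 2) = 0 := by rw [h0]; simp
    rw [Int.cast_sum] at this
    have heach : ∀ i ∈ s, ((f i : ℤ) : ZMod 2) = 1 := by
      intro i hi
      obtain ⟨c, hc⟩ := h i hi
      rw [hc]; push_cast
      rw [show ((2 : ZMod 2)) = 0 by decide]; ring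
    rw [Finset.sum_congr rfl heach, Finset.sum_const, nsmul_eq_mul, mul_one] at this
    exact this
  have : (2 : ℕ) ∣ s.card := (ZMod.natCast_eq_zero_iff _ _).mp hz
  rw [Nat.even_iff]; omega


/-- In the translationally invariant 1D XYZ model, all closed-path weights in the
path-integral expansion are nonnegative: for a closed sequence of bitstrings in which
each consecutive pair differs by one application of `α XX + β YY` on an adjacent pair
of sites, the numbers `m₁` of aligned applications and `m₂` of anti-aligned
applications are both even, and the product of matrix elements equals
`(α−β)^m₁ (α+β)^m₂ ≥ 0`. -/
theorem xyz_closed_path_weights_nonneg (n N : ℕ) (α β : ℝ)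
    (x : Fin (N + 1) → Fin n → Bool) (e : Fin N → ℕ) (he : ∀ k, e k + 1 < n)
    (hstep : ∀ k : Fin N, ∀ j : Fin n,
      (x k.castSucc j ≠ x k.succ j) ↔ ((j : ℕ) = e k ∨ (j : ℕ) = e k + 1))
    (hclosed : x (Fin.last N) = x 0) :
    let aligned : Fin N → Bool := fun k =>
      x k.castSucc ⟨e k, Nat.lt_of_succ_lt (he k)⟩ == x k.castSucc ⟨e k + 1, he k⟩
    let w : Fin N → ℝ := fun k => if aligned k then α - β else α + β
    let m₁ := (Finset.univ.filter fun k => aligned k = true).card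
    let m₂ := (Finset.univ.filter fun k => aligned k = false).card
    Even m₁ ∧ Even m₂ ∧ (∏ k, w k) = (α - β) ^ m₁ * (α + β) ^ m₂ ∧ 0 ≤ ∏ k, w k := by
  classical
  intro aligned w m₁ m₂
  set j0 : Fin N → Fin n := fun k => ⟨e k, Nat.lt_of_succ_lt (he k)⟩ with hj0def
  set j1 : Fin N → Fin n := fun k => ⟨e k + 1, he k⟩ with hj1def
  have haligned : ∀ k : Fin N, aligned k = (x k.castSucc (j0 k) == x k.castSucc (j1 k)) :=
    fun _ => rfl
  have hw : ∀ k : Fin N, w k = if aligned k then α - β else α + β := fun _ => rfl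
  have hne : ∀ k, j0 k ≠ j1 k := by
    intro k h
    have := congrArg Fin.val h
    simp [hj0def, hj1def] at this
  have hflip0 : ∀ k, x k.succ (j0 k) = !(x k.castSucc (j0 k)) := by
    intro k
    have h : x k.castSucc (j0 k) ≠ x k.succ (j0 k) := (hstep k (j0 k)).mpr (Or.inl rfl)
    revert h; cases hx : x k.castSucc (j0 k) <;> cases hy : x k.succ (j0 k) <;> simp
  have hflip1 : ∀ k, x k.succ (j1 k) = !(x k.castSucc (j1 k)) := by
    intro k
    have h : x k.castSucc (j1 k) ≠ x k.succ (j1 k) := (hstep k (j1 k)).mpr (Or.inr rfl)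
    revert h; cases hx : x k.castSucc (j1 k) <;> cases hy : x k.succ (j1 k) <;> simp
  have hsame : ∀ k, ∀ j : Fin n, j ≠ j0 k → j ≠ j1 k → x k.succ j = x k.castSucc j := by
    intro k j h1 h2
    by_contra h
    rcases (hstep k j).mp (fun hh => h hh.symm) with h' | h'
    · exact h1 (Fin.ext h')
    · exact h2 (Fin.ext h')
  set D0 : Fin N → ℤ := fun k => xyzInd (x k.succ (j0 k)) - xyzInd (x k.castSucc (j0 k)) with hD0def
  set D1 : Fin N → ℤ := fun k => xyzInd (x k.succ (j1 k)) - xyzInd (x k.castSucc (j1 k)) with hD1def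
  have hD0val : ∀ k, D0 k = 1 ∨ D0 k = -1 := by
    intro k
    simp only [hD0def]
    rw [hflip0 k]
    exact xyzInd_flip _
  have hD1val : ∀ k, D1 k = 1 ∨ D1 k = -1 := by
    intro k
    simp only [hD1def]
    rw [hflip1 k]
    exact xyzInd_flip _
  have hD1_of_aligned : ∀ k, aligned k = true → D1 k = D0 k := by
    intro k hk
    rw [haligned k] at hk
    have hab : x k.castSucc (j0 k) = x k.castSucc (j1 k) := by simpa using hk
    simp only [hD0def, hD1def]
    rw [hflip0 k, hflip1 k, hab]
  have hD1_of_anti : ∀ k, aligned k = false → D1 k = -D0 k := by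
    intro k hk
    rw [haligned k] at hk
    have hab : x k.castSucc (j1 k) = !(x k.castSucc (j0 k)) := by
      cases h0 : x k.castSucc (j0 k) <;> cases h1 : x k.castSucc (j1 k) <;> simp_all
    simp only [hD0def, hD1def]
    rw [hflip0 k, hflip1 k, hab]
    cases x k.castSucc (j0 k) <;> simp [xyzInd]
  -- Hamming-weight telescoping: sum of (D0 + D1) over all steps is zero
  have hWstep : ∀ k : Fin N, (∑ j, xyzInd (x k.succ j)) - (∑ j, xyzInd (x k.castSucc j))
      = D0 k + D1 k := fun k =>
    xyz_sum_sub _ _ _ _ (hne k) (fun j h1 h2 => by rw [hsame k j h1 h2])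
  have hWsum : ∑ k : Fin N, (D0 k + D1 k) = 0 :=
    calc ∑ k : Fin N, (D0 k + D1 k)
        = ∑ k : Fin N, ((∑ j, xyzInd (x k.succ j)) - (∑ j, xyzInd (x k.castSucc j))) :=
          Finset.sum_congr rfl fun k _ => (hWstep k).symm
      _ = 0 := xyz_telescope (fun i => ∑ j, xyzInd (x i j))
          (congrArg (fun y => ∑ j : Fin n, xyzInd (y j)) hclosed)
  -- position-sum telescoping
  have hPstep : ∀ k : Fin N, (∑ j : Fin n, ((j : ℕ) : ℤ) * xyzInd (x k.succ j))
      - (∑ j : Fin n, ((j : ℕ) : ℤ) * xyzInd (x k.castSucc j))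
      = (e k : ℤ) * D0 k + ((e k : ℤ) + 1) * D1 k := by
    intro k
    rw [xyz_sum_sub (fun j : Fin n => ((j : ℕ) : ℤ) * xyzInd (x k.succ j))
        (fun j : Fin n => ((j : ℕ) : ℤ) * xyzInd (x k.castSucc j))
        (j0 k) (j1 k) (hne k) (fun j h1 h2 => by simp only [hsame k j h1 h2])]
    have hv0 : (((j0 k : Fin n) : ℕ) : ℤ) = (e k : ℤ) := by simp [hj0def]
    have hv1 : (((j1 k : Fin n) : ℕ) : ℤ) = (e k : ℤ) + 1 := by
      simp [hj1def]
    simp only [hD0def, hD1def, hv0, hv1]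
    ring
  have hPsum : ∑ k : Fin N, ((e k : ℤ) * D0 k + ((e k : ℤ) + 1) * D1 k) = 0 :=
    calc ∑ k : Fin N, ((e k : ℤ) * D0 k + ((e k : ℤ) + 1) * D1 k)
        = ∑ k : Fin N, ((∑ j : Fin n, ((j : ℕ) : ℤ) * xyzInd (x k.succ j))
            - (∑ j : Fin n, ((j : ℕ) : ℤ) * xyzInd (x k.castSucc j))) :=
          Finset.sum_congr rfl fun k _ => (hPstep k).symm
      _ = 0 := xyz_telescope (fun i => ∑ j : Fin n, ((j : ℕ) : ℤ) * xyzInd (x i j))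
          (congrArg (fun y => ∑ j : Fin n, ((j : ℕ) : ℤ) * xyzInd (y j)) hclosed)
  -- N is even
  have hNeven : Even N := by
    have hodd : ∀ k : Fin N, Odd ((e k : ℤ) * D0 k + ((e k : ℤ) + 1) * D1 k) := by
      intro k
      rcases hD0val k with h0 | h0 <;> rcases hD1val k with h1 | h1 <;>
        rw [h0, h1, Int.odd_iff] <;> omega
    have h := xyz_card_even Finset.univ (fun k : Fin N => (e k : ℤ) * D0 k + ((e k : ℤ) + 1) * D1 k)
      (fun k _ => hodd k) hPsum
    simpa using h
  -- m₁ is even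
  have hanti_zero : ∀ k ∈ Finset.univ.filter (fun k => ¬ aligned k = true), D0 k + D1 k = 0 := by
    intro k hk
    have hk2 : ¬ aligned k = true := (Finset.mem_filter.mp hk).2
    have hfalse : aligned k = false := by
      cases h : aligned k
      · rfl
      · exact absurd h hk2
    rw [hD1_of_anti k hfalse]; ring
  have hS_sum : ∑ k ∈ Finset.univ.filter (fun k => aligned k = true), (D0 k + D1 k) = 0 := by
    have hsplit := Finset.sum_filter_add_sum_filter_not Finset.univ
      (fun k => aligned k = true) (fun k => D0 k + D1 k)
    rw [Finset.sum_eq_zero hanti_zero, hWsum] at hsplit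
    omega
  have hS2 : ∑ k ∈ Finset.univ.filter (fun k => aligned k = true), D0 k = 0 := by
    have hh : ∑ k ∈ Finset.univ.filter (fun k => aligned k = true), (D0 k + D1 k)
        = 2 * ∑ k ∈ Finset.univ.filter (fun k => aligned k = true), D0 k := by
      rw [Finset.mul_sum]
      refine Finset.sum_congr rfl fun k hk => ?_
      rw [hD1_of_aligned k (Finset.mem_filter.mp hk).2]; ring
    omega
  have hEvenm₁ : Even m₁ := by
    refine xyz_card_even _ D0 (fun k _ => ?_) hS2
    rcases hD0val k with h | h <;> rw [h, Int.odd_iff] <;> decide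
  -- m₁ + m₂ = N
  have hm2eq : (Finset.univ.filter fun k : Fin N => aligned k = false)
      = (Finset.univ.filter fun k => ¬ aligned k = true) := by
    refine Finset.filter_congr fun k _ => ?_
    simp [Bool.not_eq_true]
  have hcard : m₁ + m₂ = N := by
    have h := Finset.card_filter_add_card_filter_not
      (s := (Finset.univ : Finset (Fin N))) (p := fun k => aligned k = true)
    rw [Finset.card_univ, Fintype.card_fin] at h
    have : m₂ = (Finset.univ.filter fun k : Fin N => ¬ aligned k = true).card :=
      congrArg Finset.card hm2eq
    omega
  have hEvenm₂ : Even m₂ := by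
    rw [Nat.even_iff] at hEvenm₁ hNeven ⊢
    omega
  -- product formula
  have h1 : ∏ k ∈ Finset.univ.filter (fun k => aligned k = true), w k = (α - β) ^ m₁ :=
    calc ∏ k ∈ Finset.univ.filter (fun k => aligned k = true), w k
        = ∏ _k ∈ Finset.univ.filter (fun k => aligned k = true), (α - β) :=
          Finset.prod_congr rfl fun k hk => by
            have h := (Finset.mem_filter.mp hk).2
            rw [hw k, h]; simp
      _ = (α - β) ^ m₁ := Finset.prod_const _
  have h2 : ∏ k ∈ Finset.univ.filter (fun k => ¬ aligned k = true), w k = (α + β) ^ m₂ := by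
    have hc : (Finset.univ.filter fun k : Fin N => ¬ aligned k = true).card = m₂ :=
      (congrArg Finset.card hm2eq).symm
    calc ∏ k ∈ Finset.univ.filter (fun k => ¬ aligned k = true), w k
        = ∏ _k ∈ Finset.univ.filter (fun k => ¬ aligned k = true), (α + β) :=
          Finset.prod_congr rfl fun k hk => by
            have hk2 : ¬ aligned k = true := (Finset.mem_filter.mp hk).2
            have hfalse : aligned k = false := by
              cases h : aligned k
              · rfl
              · exact absurd h hk2
            rw [hw k, hfalse]; simp
      _ = (α + β) ^ (Finset.univ.filter fun k : Fin N => ¬ aligned k = true).card :=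
          Finset.prod_const _
      _ = (α + β) ^ m₂ := by rw [hc]
  have hprod : (∏ k, w k) = (α - β) ^ m₁ * (α + β) ^ m₂ := by
    rw [← Finset.prod_filter_mul_prod_filter_not Finset.univ (fun k => aligned k = true) w,
      h1, h2]
  refine ⟨hEvenm₁, hEvenm₂, hprod, ?_⟩
  rw [hprod]
  exact mul_nonneg (hEvenm₁.pow_nonneg _) (hEvenm₂.pow_nonneg _)
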